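/- Let K be a field of characteristic p > 0, let k ⊆ K be a perfect subfield, let m > 0, set q = p^m, and let f be an m-truncated group law over k. Let ∂ = (∂_n)_{0 ≤ n < q} be an f-iterative m-truncated HS-derivation on K such that ∂_n(a) = 0 for all a ∈ k and all n ≥ 1, and such that ∂_1 is not the zero map. Let C = {r ∈ K : ∂_n(r) = 0 for all n with 1 ≤ n < q}. Then C is a subfield of K and the degree [K : C] equals p^m. -/

import Mathlib

open Finset MvPolynomial

/-- `f ∈ k[X,Y]` is an `m`-truncated group law over `k` (for the prime `p`):
all monomials of `f` have both exponents `< p ^ m`, `f(X,0) = X`, `f(0,Y) = Y`, and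
`f(f(X,Y),Z) ≡ f(X,f(Y,Z))` modulo the ideal `(X^{p^m}, Y^{p^m}, Z^{p^m})`. -/
def IsTruncGroupLaw (p m : ℕ) {k : Type*} [Field k] (f : MvPolynomial (Fin 2) k) : Prop :=
  (∀ d ∈ f.support, d 0 < p ^ m ∧ d 1 < p ^ m) ∧
  (MvPolynomial.aeval ![(Polynomial.X : Polynomial k), 0] f = Polynomial.X) ∧
  (MvPolynomial.aeval ![0, (Polynomial.X : Polynomial k)] f = Polynomial.X) ∧
  (MvPolynomial.aeval
      ![MvPolynomial.aeval ![(MvPolynomial.X 0 : MvPolynomial (Fin 3) k), MvPolynomial.X 1] f,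
        MvPolynomial.X 2] f -
    MvPolynomial.aeval
      ![(MvPolynomial.X 0 : MvPolynomial (Fin 3) k),
        MvPolynomial.aeval ![(MvPolynomial.X 1 : MvPolynomial (Fin 3) k), MvPolynomial.X 2] f] f
    ∈ Ideal.span {(MvPolynomial.X 0 : MvPolynomial (Fin 3) k) ^ p ^ m,
        MvPolynomial.X 1 ^ p ^ m, MvPolynomial.X 2 ^ p ^ m})

/-- `D` is an `m`-truncated HS-derivation on `R` (for the prime `p`):
only the maps `D n` for `n < p ^ m` are relevant. -/
def IsTruncHSDeriv (p m : ℕ) {R : Type*} [CommRing R] (D : ℕ → R → R) : Prop :=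
  (∀ n, n < p ^ m → ∀ x y, D n (x + y) = D n x + D n y) ∧
  (∀ x, D 0 x = x) ∧
  (∀ n, n < p ^ m → ∀ x y, D n (x * y) = ∑ ij ∈ Finset.HasAntidiagonal.antidiagonal n, D ij.1 x * D ij.2 y)

/-- `D` is an `f`-iterative `m`-truncated HS-derivation (an `f`-derivation):
`D j ∘ D i = Σ_{n < p^m} c_{i,j,n} • D n` where `c_{i,j,n}` is the coefficient of
`X^i Y^j` in `f ^ n`. -/
def IsFIterativeTrunc (p m : ℕ) {k : Type*} [Field k] (f : MvPolynomial (Fin 2) k)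
    {R : Type*} [CommRing R] [Algebra k R] (D : ℕ → R → R) : Prop :=
  ∀ i j : ℕ, i < p ^ m → j < p ^ m → ∀ r,
    D j (D i r) = ∑ n ∈ Finset.range (p ^ m),
      MvPolynomial.coeff (Finsupp.single (0 : Fin 2) i + Finsupp.single (1 : Fin 2) j) (f ^ n)
        • D n r

/-! ### Auxiliary lemmas -/

lemma fin2_single_iff (d : Fin 2 →₀ ℕ) (n : ℕ) :
    d = Finsupp.single 0 n ↔ d 0 = n ∧ d 1 = 0 := by
  constructor
  · rintro rfl
    simp [Finsupp.single_apply]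
  · rintro ⟨h0, h1⟩
    ext i
    fin_cases i <;> simp [Finsupp.single_apply, h0, h1]

lemma coeff_single_aeval {k : Type*} [CommSemiring k] (P : MvPolynomial (Fin 2) k) (n : ℕ) :
    MvPolynomial.coeff (Finsupp.single 0 n) P
      = (MvPolynomial.aeval ![(Polynomial.X : Polynomial k), 0] P).coeff n := by
  induction P using MvPolynomial.induction_on' with
  | add p q hp hq => simp [map_add, hp, hq]
  | monomial dd c =>
    rw [MvPolynomial.coeff_monomial, MvPolynomial.aeval_monomial]
    rw [Finsupp.prod_fintype _ _ (fun i => pow_zero _)]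
    rw [Fin.prod_univ_two]
    by_cases h1 : dd 1 = 0
    · simp only [h1, Matrix.cons_val_one, Matrix.head_cons, pow_zero, mul_one,
        Matrix.cons_val_zero]
      rw [Polynomial.algebraMap_eq, Polynomial.coeff_C_mul, Polynomial.coeff_X_pow]
      by_cases h0 : dd 0 = n
      · simp [fin2_single_iff, h0, h1, eq_comm]
      · simp [fin2_single_iff, h0, h1, Ne.symm h0]
    · have : dd ≠ Finsupp.single 0 n := by
        simp [fin2_single_iff, h1]
      simp [this, h1, zero_pow h1]

lemma tri_swap {M : Type*} [AddCommMonoid M] (N : ℕ) (F : ℕ → ℕ → M) :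
    ∑ n ∈ Finset.range N, ∑ ij ∈ Finset.HasAntidiagonal.antidiagonal n, F ij.1 ij.2
      = ∑ j ∈ Finset.range N, ∑ i ∈ Finset.range (N - j), F i j := by
  induction N with
  | zero => simp
  | succ N ih =>
    rw [Finset.sum_range_succ, ih, Finset.Nat.sum_antidiagonal_eq_sum_range_succ_mk]
    rw [Finset.sum_range_succ (fun j => ∑ i ∈ Finset.range (N + 1 - j), F i j) N]
    simp only [Nat.add_sub_cancel_left, Nat.sub_self]
    have h1 : ∀ j ∈ Finset.range N,
        ∑ i ∈ Finset.range (N + 1 - j), F i j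
          = ∑ i ∈ Finset.range (N - j), F i j + F (N - j) j := by
      intro j hj
      rw [Finset.mem_range] at hj
      rw [Nat.succ_sub hj.le, Finset.sum_range_succ]
    rw [Finset.sum_congr rfl h1, Finset.sum_add_distrib]
    have h2 : ∑ k ∈ Finset.range (N + 1), F k (N - k)
        = ∑ j ∈ Finset.range N, F (N - j) j + F 0 N := by
      have hrefl := Finset.sum_range_reflect (fun k => F k (N - k)) (N + 1)
      rw [← hrefl, Finset.sum_range_succ]
      congr 1
      · apply Finset.sum_congr rfl
        intro j hj
        rw [Finset.mem_range] at hj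
        have e1 : N + 1 - 1 - j = N - j := by omega
        have e2 : N - (N - j) = j := by omega
        rw [e1, e2]
      · simp
    rw [h2]
    have : (Finset.range 1).sum (fun i => F i N) = F 0 N := by simp
    rw [this]
    abel

lemma lind {K : Type*} [Field K] (q : ℕ) (d : ℕ → K → K)
    (h0 : ∀ x, d 0 x = x)
    (hmul : ∀ n, n < q → ∀ x y, d n (x * y) = ∑ ij ∈ Finset.HasAntidiagonal.antidiagonal n, d ij.1 x * d ij.2 y)
    (hne : d 1 ≠ 0) :
    ∀ N, N < q → ∀ g : ℕ → K, (∀ x, ∑ n ∈ Finset.range (N + 1), g n * d n x = 0) →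
      ∀ n, n ≤ N → g n = 0 := by
  obtain ⟨x₀, hx₀⟩ : ∃ x₀, d 1 x₀ ≠ 0 := by
    by_contra hcon
    push_neg at hcon
    exact hne (funext hcon)
  intro N
  induction N using Nat.strong_induction_on with
  | _ N ih =>
    match N with
    | 0 =>
      intro _ g hg n hn
      interval_cases n
      have := hg 1
      simpa [h0] using this
    | (N + 1) =>
      intro hNq g hg
      have hNq' : N < q := by omega
      have key : ∀ x y : K,
          ∑ j ∈ Finset.range (N + 1),
            (∑ i ∈ Finset.range (N + 1 - j), g (i + 1 + j) * d (i + 1) x) * d j y = 0 := by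
        intro x y
        have h1 : ∑ n ∈ Finset.range (N + 2), g n * d n (x * y) = 0 := hg (x * y)
        have h2 : ∑ n ∈ Finset.range (N + 2), g n * d n (x * y)
            = ∑ n ∈ Finset.range (N + 2), ∑ ij ∈ Finset.HasAntidiagonal.antidiagonal n,
                g (ij.1 + ij.2) * (d ij.1 x * d ij.2 y) := by
          apply Finset.sum_congr rfl
          intro n hn
          rw [Finset.mem_range] at hn
          rw [hmul n (by omega) x y, Finset.mul_sum]
          apply Finset.sum_congr rfl
          intro ij hij
          rw [Finset.HasAntidiagonal.mem_antidiagonal] at hij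
          rw [hij]
        rw [h2, tri_swap (N + 2) (fun i j => g (i + j) * (d i x * d j y))] at h1
        have h3 : ∀ j ∈ Finset.range (N + 2),
            ∑ i ∈ Finset.range (N + 2 - j), g (i + j) * (d i x * d j y)
              = (∑ i ∈ Finset.range (N + 1 - j), g (i + 1 + j) * d (i + 1) x) * d j y
                + x * (g j * d j y) := by
          intro j hj
          rw [Finset.mem_range] at hj
          have e : N + 2 - j = (N + 1 - j) + 1 := by omega
          rw [e, Finset.sum_range_succ']
          simp only [h0, zero_add]
          rw [Finset.sum_mul]
          congr 1
          · apply Finset.sum_congr rfl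
            intro i _
            ring
          · ring
        rw [Finset.sum_congr rfl h3, Finset.sum_add_distrib] at h1
        have h4 : ∑ j ∈ Finset.range (N + 2), x * (g j * d j y) = 0 := by
          rw [← Finset.mul_sum]
          have := hg y
          simp only [this, mul_zero]
        rw [h4, add_zero] at h1
        rw [Finset.sum_range_succ] at h1
        simpa using h1
      have htop : g (N + 1) = 0 := by
        have hGall : ∑ i ∈ Finset.range (N + 1 - N), g (i + 1 + N) * d (i + 1) x₀ = 0 :=
          ih N (by omega) hNq' (fun j =>
            ∑ i ∈ Finset.range (N + 1 - j), g (i + 1 + j) * d (i + 1) x₀) (key x₀) N le_rfl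
        have hone : N + 1 - N = 1 := by omega
        rw [hone, Finset.sum_range_one] at hGall
        have e : 0 + 1 + N = N + 1 := by omega
        rw [e] at hGall
        have : g (N + 1) * d 1 x₀ = 0 := by
          simpa using hGall
        rcases mul_eq_zero.mp this with h | h
        · exact h
        · exact absurd h hx₀
      have hg' : ∀ x, ∑ n ∈ Finset.range (N + 1), g n * d n x = 0 := by
        intro x
        have := hg x
        rw [Finset.sum_range_succ, htop, zero_mul, add_zero] at this
        exact this
      intro n hn
      rcases Nat.lt_or_ge n (N + 1) with h | h
      · exact ih N (by omega) hNq' g hg' n (by omega)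
      · have : n = N + 1 := by omega
        rw [this]; exact htop

/-- The field of constants `C` of an `f`-derivation on `K` over a perfect subfield `k`,
with nonzero first component, is a subfield with `[K : C] = p ^ m`. -/
theorem f_deriv_constants_degree (p : ℕ) (hp : p.Prime) (m : ℕ) (hm : 0 < m)
    (k K : Type*) [Field k] [PerfectField k] [Field K] [Algebra k K] [CharP K p]
    (f : MvPolynomial (Fin 2) k) (hf : IsTruncGroupLaw p m f)
    (d : ℕ → K → K)
    (hd : IsTruncHSDeriv p m d)
    (hiter : IsFIterativeTrunc p m f d)
    (hk : ∀ a : k, ∀ n : ℕ, 1 ≤ n → d n (algebraMap k K a) = 0)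
    (hne : d 1 ≠ 0) :
    ∃ C : Subfield K,
      (∀ r : K, r ∈ C ↔ ∀ n : ℕ, 1 ≤ n → n < p ^ m → d n r = 0) ∧
      Module.finrank C K = p ^ m := by
  classical
  obtain ⟨hDadd, hD0, hDmul⟩ := hd
  have hq1 : 1 < p ^ m := Nat.one_lt_pow (by omega) hp.one_lt
  have hq0 : 0 < p ^ m := by omega
  set q : ℕ := p ^ m with hq
  -- basic facts about d
  have hdzero : ∀ n, n < q → d n (0 : K) = 0 := by
    intro n hn
    have h := hDadd n hn 0 0
    rw [add_zero] at h
    linear_combination -h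
  have hdone : ∀ n, 1 ≤ n → n < q → d n (1 : K) = 0 := by
    intro n
    induction n using Nat.strong_induction_on with
    | _ n ih =>
      intro hn1 hnq
      obtain ⟨n', rfl⟩ : ∃ n', n = n' + 1 := ⟨n - 1, by omega⟩
      have h := hDmul (n' + 1) hnq 1 1
      rw [mul_one, Finset.Nat.sum_antidiagonal_eq_sum_range_succ_mk] at h
      rw [Finset.sum_range_succ, Finset.sum_range_succ'] at h
      have hmid : ∑ i ∈ Finset.range n', d (i + 1) (1 : K) * d (n' + 1 - (i + 1)) 1 = 0 := by
        apply Finset.sum_eq_zero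
        intro i hi
        rw [Finset.mem_range] at hi
        rw [ih (i + 1) (by omega) (by omega) (by omega), zero_mul]
      rw [hmid, zero_add, hD0, Nat.sub_zero, Nat.sub_self, hD0, one_mul, mul_one] at h
      linear_combination -h
  -- d of a finite sum
  have hdsum : ∀ n, n < q → ∀ {ι : Type} (s : Finset ι) (F : ι → K),
      d n (∑ i ∈ s, F i) = ∑ i ∈ s, d n (F i) := by
    intro n hn ι s F
    induction s using Finset.cons_induction with
    | empty => simpa using hdzero n hn
    | cons a s ha ih =>
      rw [Finset.sum_cons, Finset.sum_cons, hDadd n hn, ih]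
  -- the set of constants
  set Cset : Set K := {r : K | ∀ n : ℕ, 1 ≤ n → n < p ^ m → d n r = 0} with hCset
  have hzeroC : (0 : K) ∈ Cset := fun n h1 h2 => hdzero n h2
  have honeC : (1 : K) ∈ Cset := fun n h1 h2 => hdone n h1 h2
  have hmulC : ∀ {x y : K}, x ∈ Cset → y ∈ Cset → x * y ∈ Cset := by
    intro x y hx hy n h1 h2
    rw [hDmul n h2]
    apply Finset.sum_eq_zero
    intro ij hij
    rw [Finset.HasAntidiagonal.mem_antidiagonal] at hij
    rcases Nat.eq_zero_or_pos ij.1 with h | h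
    · have : ij.2 = n := by omega
      rw [this, hy n h1 h2, mul_zero]
    · rw [hx ij.1 h (by omega), zero_mul]
  have haddC : ∀ {x y : K}, x ∈ Cset → y ∈ Cset → x + y ∈ Cset := by
    intro x y hx hy n h1 h2
    rw [hDadd n h2, hx n h1 h2, hy n h1 h2, add_zero]
  have hnegC : ∀ {x : K}, x ∈ Cset → -x ∈ Cset := by
    intro x hx n h1 h2
    have h := hDadd n h2 x (-x)
    rw [add_neg_cancel, hdzero n h2, hx n h1 h2] at h
    linear_combination -h
  have hinvC : ∀ {x : K}, x ∈ Cset → x⁻¹ ∈ Cset := by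
    intro x hx
    rcases eq_or_ne x 0 with rfl | hx0
    · rw [inv_zero]; exact hzeroC
    · intro n h1 h2
      have h := hDmul n h2 x x⁻¹
      rw [mul_inv_cancel₀ hx0, hdone n h1 h2,
        Finset.Nat.sum_antidiagonal_eq_sum_range_succ_mk, Finset.sum_range_succ'] at h
      have hmid : ∑ i ∈ Finset.range n, d (i + 1) x * d (n - (i + 1)) x⁻¹ = 0 := by
        apply Finset.sum_eq_zero
        intro i hi
        rw [Finset.mem_range] at hi
        rw [hx (i + 1) (by omega) (by omega), zero_mul]
      rw [hmid, zero_add, hD0, Nat.sub_zero] at h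
      -- h : 0 = x * d n x⁻¹
      rcases mul_eq_zero.mp h.symm with h' | h'
      · exact absurd h' hx0
      · exact h'
  set C : Subfield K :=
    { carrier := Cset
      mul_mem' := hmulC
      one_mem' := honeC
      add_mem' := haddC
      zero_mem' := hzeroC
      neg_mem' := hnegC
      inv_mem' := fun x hx => hinvC hx } with hC
  have hmemC : ∀ r : K, r ∈ C ↔ r ∈ Cset := fun r => Iff.rfl
  -- C-linearity of the d n
  have hdC : ∀ c ∈ Cset, ∀ n, n < q → ∀ x : K, d n (c * x) = c * d n x := by
    intro c hc n hn x
    rw [hDmul n hn, Finset.Nat.sum_antidiagonal_eq_sum_range_succ_mk, Finset.sum_range_succ']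
    have hmid : ∑ i ∈ Finset.range n, d (i + 1) c * d (n - (i + 1)) x = 0 := by
      apply Finset.sum_eq_zero
      intro i hi
      rw [Finset.mem_range] at hi
      rw [hc (i + 1) (by omega) (by omega), zero_mul]
    rw [hmid, zero_add, hD0, Nat.sub_zero]
  -- the delta property of coefficients of powers of f at Y-degree 0
  obtain ⟨hsupp, hX0, hrest⟩ := hf
  have hdelta : ∀ n l : ℕ,
      MvPolynomial.coeff (Finsupp.single (0 : Fin 2) n + Finsupp.single (1 : Fin 2) 0) (f ^ l)
        = if l = n then (1 : k) else 0 := by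
    intro n l
    rw [Finsupp.single_zero, add_zero, coeff_single_aeval, map_pow, hX0,
      Polynomial.coeff_X_pow]
    rcases eq_or_ne l n with rfl | hln
    · simp
    · rw [if_neg (Ne.symm hln), if_neg hln]
  -- the family Φ of all derivative vectors spans (Fin q → K) over K
  set Φ : K → (Fin q → K) := fun r nn => d (↑nn) r with hΦ
  have hspanTop : Submodule.span K (Set.range Φ) = ⊤ := by
    by_contra hnt
    obtain ⟨φ, φ0, hφ⟩ := Submodule.exists_dual_map_eq_bot_of_lt_top
      (lt_top_iff_ne_top.mpr hnt) inferInstance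
    set a : Fin q → K := fun nn => φ (fun j => if nn = j then (1 : K) else 0) with ha
    have hφv : ∀ v : Fin q → K, φ v = ∑ nn : Fin q, v nn * a nn := by
      intro v
      conv_lhs => rw [pi_eq_sum_univ v]
      rw [map_sum]
      apply Finset.sum_congr rfl
      intro nn _
      rw [map_smul, smul_eq_mul, ha]
    set g : ℕ → K := fun n => if h : n < q then a ⟨n, h⟩ else 0 with hg
    have hrel : ∀ x : K, ∑ n ∈ Finset.range q, g n * d n x = 0 := by
      intro x
      have hmem : Φ x ∈ Submodule.span K (Set.range Φ) :=
        Submodule.subset_span ⟨x, rfl⟩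
      have h0' : φ (Φ x) = 0 := by
        have h1 := Submodule.mem_map_of_mem (f := φ) hmem
        rw [hφ] at h1
        exact (Submodule.mem_bot K).mp h1
      rw [hφv] at h0'
      rw [← h0', ← Fin.sum_univ_eq_sum_range (fun n => g n * d n x) q]
      apply Finset.sum_congr rfl
      intro nn _
      have hgn : g ↑nn = a nn := by
        rw [hg]
        simp [nn.2]
      rw [hgn, mul_comm]
    have hzero : ∀ nn : Fin q, a nn = 0 := by
      intro nn
      have h1 := lind q d hD0 hDmul hne (q - 1) (by omega) g (by
        intro x
        have e : q - 1 + 1 = q := by omega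
        rw [e]
        exact hrel x) ↑nn (by omega)
      rw [hg] at h1
      simpa [nn.2] using h1
    apply φ0
    apply LinearMap.ext
    intro v
    rw [hφv]
    simp [hzero]
  -- extract a basis of (Fin q → K) from the range of Φ
  have hst : ⊤ ≤ Submodule.span K (Set.range Φ) := hspanTop.ge
  let B0 := Module.Basis.ofSpan hst
  haveI := FiniteDimensional.fintypeBasisIndex B0
  have hcard : Fintype.card
      ((linearIndepOn_empty K (id : (Fin q → K) → (Fin q → K))).extend (Set.empty_subset (Set.range Φ))) = q := by
    have h1 := Module.finrank_eq_card_basis B0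
    rw [Module.finrank_pi, Fintype.card_fin] at h1
    exact h1.symm
  let e := Fintype.equivFinOfCardEq hcard
  let b : Module.Basis (Fin q) K (Fin q → K) := B0.reindex e
  have hbmem : ∀ t : Fin q, b t ∈ Set.range Φ := by
    intro t
    have h1 : b t = B0 (e.symm t) := B0.reindex_apply e t
    rw [h1, Module.Basis.ofSpan_apply_self]
    exact (linearIndepOn_empty K (id : (Fin q → K) → (Fin q → K))).extend_subset
      (Set.empty_subset (Set.range Φ)) (e.symm t).2
  choose xv hxv using hbmem
  -- linear independence of the maps d n over K, in matrix form
  have hM : ∀ w : Fin q → K,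
      (∀ nn : Fin q, ∑ t : Fin q, w t * d (↑nn) (xv t) = 0) → ∀ t, w t = 0 := by
    intro w hw
    have hsum : ∑ t : Fin q, w t • b t = 0 := by
      ext nn
      rw [Finset.sum_apply]
      simp only [Pi.smul_apply, smul_eq_mul, Pi.zero_apply]
      calc ∑ t : Fin q, w t * b t nn = ∑ t : Fin q, w t * d (↑nn) (xv t) := by
            apply Finset.sum_congr rfl
            intro t _
            rw [← hxv t]
        _ = 0 := hw nn
    exact fun t => Fintype.linearIndependent_iff.mp b.linearIndependent w hsum t
  have hSpan : ∀ v : Fin q → K, ∃ bb : Fin q → K,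
      ∀ nn : Fin q, ∑ t : Fin q, bb t * d (↑nn) (xv t) = v nn := by
    intro v
    refine ⟨fun t => b.repr v t, ?_⟩
    intro nn
    have hs := b.sum_repr v
    have h1 := congrFun hs nn
    rw [Finset.sum_apply] at h1
    simp only [Pi.smul_apply, smul_eq_mul] at h1
    calc ∑ t : Fin q, b.repr v t * d (↑nn) (xv t)
        = ∑ t : Fin q, b.repr v t * b t nn := by
          apply Finset.sum_congr rfl
          intro t _
          rw [← hxv t]
      _ = v nn := h1
  -- every element of K is a Cset-combination of the xv t
  have main : ∀ y : K, ∃ bb : Fin q → K,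
      (∀ t, bb t ∈ Cset) ∧ ∑ t : Fin q, bb t * xv t = y := by
    intro y
    obtain ⟨bb, hbb⟩ := hSpan (fun nn => d (↑nn) y)
    have hconst : ∀ u, u < q → 1 ≤ u → ∀ t, d u (bb t) = 0 := by
      intro u
      induction u using Nat.strong_induction_on with
      | _ u ihu =>
        intro huq hu1
        obtain ⟨u', rfl⟩ : ∃ u', u = u' + 1 := ⟨u - 1, by omega⟩
        have hvec : ∀ nn : Fin q, ∑ t : Fin q, d (u' + 1) (bb t) * d (↑nn) (xv t) = 0 := by
          intro nn
          have hback : ∀ l, l < q → d l y = ∑ t : Fin q, bb t * d l (xv t) := by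
            intro l hl
            exact (hbb ⟨l, hl⟩).symm
          -- first expression for d (u'+1) (d nn y)
          have w1 : d (u' + 1) (d (↑nn) y)
              = ∑ t : Fin q, bb t * ∑ l ∈ Finset.range q,
                  MvPolynomial.coeff
                    (Finsupp.single (0 : Fin 2) (↑nn : ℕ) + Finsupp.single (1 : Fin 2) (u' + 1))
                    (f ^ l) • d l (xv t) := by
            rw [hiter (↑nn) (u' + 1) nn.2 huq y]
            calc ∑ l ∈ Finset.range q,
                MvPolynomial.coeff
                  (Finsupp.single (0 : Fin 2) (↑nn : ℕ) + Finsupp.single (1 : Fin 2) (u' + 1))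
                  (f ^ l) • d l y
                = ∑ l ∈ Finset.range q, ∑ t : Fin q, bb t *
                    (MvPolynomial.coeff
                      (Finsupp.single (0 : Fin 2) (↑nn : ℕ) + Finsupp.single (1 : Fin 2) (u' + 1))
                      (f ^ l) • d l (xv t)) := by
                  apply Finset.sum_congr rfl
                  intro l hl
                  rw [Finset.mem_range] at hl
                  rw [hback l hl, Finset.smul_sum]
                  apply Finset.sum_congr rfl
                  intro t _
                  rw [mul_smul_comm]
              _ = ∑ t : Fin q, ∑ l ∈ Finset.range q, bb t *
                    (MvPolynomial.coeff
                      (Finsupp.single (0 : Fin 2) (↑nn : ℕ) + Finsupp.single (1 : Fin 2) (u' + 1))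
                      (f ^ l) • d l (xv t)) := Finset.sum_comm
              _ = ∑ t : Fin q, bb t * ∑ l ∈ Finset.range q,
                    MvPolynomial.coeff
                      (Finsupp.single (0 : Fin 2) (↑nn : ℕ) + Finsupp.single (1 : Fin 2) (u' + 1))
                      (f ^ l) • d l (xv t) := by
                  apply Finset.sum_congr rfl
                  intro t _
                  rw [Finset.mul_sum]
          -- second expression for d (u'+1) (d nn y)
          have w2 : d (u' + 1) (d (↑nn) y)
              = ∑ w ∈ Finset.range (u' + 1 + 1), ∑ t : Fin q,
                  d w (bb t) * ∑ l ∈ Finset.range q,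
                    MvPolynomial.coeff
                      (Finsupp.single (0 : Fin 2) (↑nn : ℕ)
                        + Finsupp.single (1 : Fin 2) (u' + 1 - w)) (f ^ l) • d l (xv t) := by
            conv_lhs => rw [← hbb nn]
            rw [hdsum (u' + 1) huq]
            have hterm : ∀ t : Fin q, d (u' + 1) (bb t * d (↑nn) (xv t))
                = ∑ w ∈ Finset.range (u' + 1 + 1),
                    d w (bb t) * ∑ l ∈ Finset.range q,
                      MvPolynomial.coeff
                        (Finsupp.single (0 : Fin 2) (↑nn : ℕ)
                          + Finsupp.single (1 : Fin 2) (u' + 1 - w)) (f ^ l) • d l (xv t) := by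
              intro t
              rw [hDmul (u' + 1) huq, Finset.Nat.sum_antidiagonal_eq_sum_range_succ_mk]
              apply Finset.sum_congr rfl
              intro w hw
              rw [Finset.mem_range] at hw
              rw [hiter (↑nn) (u' + 1 - w) nn.2 (by omega) (xv t)]
            rw [Finset.sum_congr rfl (fun t _ => hterm t), Finset.sum_comm]
          -- split the outer sum in w2
          rw [Finset.sum_range_succ, Finset.sum_range_succ'] at w2
          simp only [Nat.sub_zero, Nat.sub_self, hD0] at w2
          have hmidz : ∑ kk ∈ Finset.range u', ∑ t : Fin q,
              d (kk + 1) (bb t) * ∑ l ∈ Finset.range q,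
                MvPolynomial.coeff
                  (Finsupp.single (0 : Fin 2) (↑nn : ℕ)
                    + Finsupp.single (1 : Fin 2) (u' + 1 - (kk + 1))) (f ^ l) • d l (xv t)
              = 0 := by
            apply Finset.sum_eq_zero
            intro kk hkk
            rw [Finset.mem_range] at hkk
            apply Finset.sum_eq_zero
            intro t _
            rw [ihu (kk + 1) (by omega) (by omega) (by omega) t, zero_mul]
          rw [hmidz, zero_add, ← w1] at w2
          -- w2 : A = A + top term, where the top term is our goal sum with delta-coefficients
          have htopz : ∑ t : Fin q,
              d (u' + 1) (bb t) * ∑ l ∈ Finset.range q,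
                MvPolynomial.coeff
                  (Finsupp.single (0 : Fin 2) (↑nn : ℕ) + Finsupp.single (1 : Fin 2) 0)
                  (f ^ l) • d l (xv t) = 0 := by
            linear_combination -w2
          calc ∑ t : Fin q, d (u' + 1) (bb t) * d (↑nn) (xv t)
              = ∑ t : Fin q, d (u' + 1) (bb t) * ∑ l ∈ Finset.range q,
                  MvPolynomial.coeff
                    (Finsupp.single (0 : Fin 2) (↑nn : ℕ) + Finsupp.single (1 : Fin 2) 0)
                    (f ^ l) • d l (xv t) := by
                apply Finset.sum_congr rfl
                intro t _
                congr 1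
                have hds : ∀ l ∈ Finset.range q,
                    MvPolynomial.coeff
                      (Finsupp.single (0 : Fin 2) (↑nn : ℕ) + Finsupp.single (1 : Fin 2) 0)
                      (f ^ l) • d l (xv t)
                      = if l = (↑nn : ℕ) then d l (xv t) else 0 := by
                  intro l _
                  rw [hdelta (↑nn : ℕ) l]
                  split_ifs with h
                  · rw [one_smul]
                  · rw [zero_smul]
                rw [Finset.sum_congr rfl hds, Finset.sum_ite_eq' (Finset.range q) (↑nn : ℕ)]
                rw [if_pos (Finset.mem_range.mpr nn.2)]
            _ = 0 := htopz
        intro t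
        exact hM (fun t => d (u' + 1) (bb t)) hvec t
    refine ⟨bb, ?_, ?_⟩
    · intro t n h1 h2
      exact hconst n h2 h1 t
    · have h0' := hbb ⟨0, hq0⟩
      simp only [hD0] at h0'
      exact h0'
  -- xv is a basis of K over C
  have li : LinearIndependent C xv := by
    apply Fintype.linearIndependent_iff.mpr
    intro g hg t
    have hgK : ∀ nn : Fin q, ∑ t : Fin q, (↑(g t) : K) * d (↑nn) (xv t) = 0 := by
      intro nn
      have hzz : (∑ t : Fin q, (↑(g t) : K) * xv t) = 0 := by
        rw [← hg]
        apply Finset.sum_congr rfl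
        intro t _
        rfl
      have h1 : d (↑nn) (∑ t : Fin q, (↑(g t) : K) * xv t) = 0 := by
        rw [hzz, hdzero (↑nn) nn.2]
      rw [hdsum (↑nn) nn.2] at h1
      calc ∑ t : Fin q, (↑(g t) : K) * d (↑nn) (xv t)
          = ∑ t : Fin q, d (↑nn) ((↑(g t) : K) * xv t) := by
            apply Finset.sum_congr rfl
            intro t _
            rw [hdC (↑(g t)) (g t).2 (↑nn) nn.2 (xv t)]
        _ = 0 := h1
    have h2 := hM (fun t => (↑(g t) : K)) hgK t
    exact Subtype.ext (by simpa using h2)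
  have hspanC : ⊤ ≤ Submodule.span C (Set.range xv) := by
    intro y _
    obtain ⟨bb, hbC, hbsum⟩ := main y
    rw [← hbsum]
    apply Submodule.sum_mem
    intro t _
    have he : bb t * xv t = (⟨bb t, hbC t⟩ : C) • xv t := rfl
    rw [he]
    exact Submodule.smul_mem _ _ (Submodule.subset_span (Set.mem_range_self t))
  let bC : Module.Basis (Fin q) C K := Module.Basis.mk li hspanC
  refine ⟨C, fun r => Iff.rfl, ?_⟩
  rw [Module.finrank_eq_card_basis bC, Fintype.card_fin]
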